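/- For every tree T, I(T; −1) ∈ {−1, 0, 1}; that is, the number of independent sets of even size in a tree differs from the number of independent sets of odd size by at most one. -/

import Mathlib

open Polynomial

open Classical in
/-- The independence polynomial of a graph: `∑ₖ sₖ xᵏ` where `sₖ` is the number of
independent (stable) sets of cardinality `k`. -/
noncomputable def indPoly {V : Type*} [Fintype V] (G : SimpleGraph V) : Polynomial ℤ :=
  ∑ s : Finset V, if ∀ u ∈ s, ∀ v ∈ s, ¬ G.Adj u v then Polynomial.X ^ s.card else 0

namespace IndPolyAux

variable {V : Type*} [Fintype V]

open Classical in
noncomputable def F (T : SimpleGraph V) (s : Finset V) : ℤ :=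
  if ∀ u ∈ s, ∀ v ∈ s, ¬ T.Adj u v then (-1 : ℤ) ^ s.card else 0

open Classical in
noncomputable def g (T : SimpleGraph V) (A : Finset V) : ℤ := ∑ s ∈ A.powerset, F T s

open Classical in
lemma g_rec (T : SimpleGraph V) {A : Finset V} {v : V} (hv : v ∈ A) :
    g T A = g T (A.erase v) - g T ((A.erase v).filter fun w => ¬ T.Adj v w) := by
  classical
  set A' := A.erase v with hA'
  set B := A'.filter fun w => ¬ T.Adj v w with hBdef
  have hvA' : v ∉ A' := Finset.notMem_erase v A
  have h1 : A = insert v A' := (Finset.insert_erase hv).symm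
  rw [g, h1, Finset.sum_powerset_insert hvA']
  have h2 : ∀ t ∈ A'.powerset,
      F T (insert v t) = if t ∈ B.powerset then -F T t else 0 := by
    intro t ht
    rw [Finset.mem_powerset] at ht
    have hvt : v ∉ t := fun h => hvA' (ht h)
    by_cases hB : ∀ w ∈ t, ¬ T.Adj v w
    · have hmem : t ∈ B.powerset := by
        rw [Finset.mem_powerset]
        intro x hx
        exact Finset.mem_filter.2 ⟨ht hx, hB x hx⟩
      rw [if_pos hmem]
      have hcard : (insert v t).card = t.card + 1 := Finset.card_insert_of_notMem hvt
      have hind : (∀ u ∈ insert v t, ∀ w ∈ insert v t, ¬ T.Adj u w) ↔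
          (∀ u ∈ t, ∀ w ∈ t, ¬ T.Adj u w) := by
        constructor
        · intro h u hu w hw
          exact h u (Finset.mem_insert_of_mem hu) w (Finset.mem_insert_of_mem hw)
        · intro h a ha b hb had
          rcases Finset.mem_insert.1 ha with hav | ha' <;>
            rcases Finset.mem_insert.1 hb with hbv | hb'
          · rw [hav, hbv] at had
            exact T.loopless.irrefl v had
          · rw [hav] at had
            exact hB b hb' had
          · rw [hbv] at had
            exact hB a ha' had.symm
          · exact h a ha' b hb' had
      unfold F
      rw [hcard]
      by_cases hti : ∀ u ∈ t, ∀ w ∈ t, ¬ T.Adj u w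
      · rw [if_pos (hind.2 hti), if_pos hti, pow_succ]
        ring
      · rw [if_neg (fun h => hti (hind.1 h)), if_neg hti]
        ring
    · push_neg at hB
      obtain ⟨w, hw, hadj⟩ := hB
      have hni : ¬ (∀ u ∈ insert v t, ∀ x ∈ insert v t, ¬ T.Adj u x) := by
        intro h
        exact h v (Finset.mem_insert_self v t) w (Finset.mem_insert_of_mem hw) hadj
      have hnm : t ∉ B.powerset := by
        intro hmem
        exact (Finset.mem_filter.1 ((Finset.mem_powerset.1 hmem) hw)).2 hadj
      rw [if_neg hnm]
      unfold F
      rw [if_neg hni]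
  rw [Finset.sum_congr rfl h2, Finset.sum_ite_mem]
  have hBsub : B.powerset ⊆ A'.powerset :=
    Finset.powerset_mono.2 (Finset.filter_subset _ _)
  rw [Finset.inter_eq_right.2 hBsub, Finset.sum_neg_distrib, sub_eq_add_neg]
  rfl

open Classical in
lemma g_eq_zero (T : SimpleGraph V) {A : Finset V} {v : V} (hv : v ∈ A)
    (hiso : ∀ w ∈ A, ¬ T.Adj v w) : g T A = 0 := by
  classical
  have h := g_rec T hv
  rw [Finset.filter_true_of_mem (fun w hw => hiso w (Finset.mem_of_mem_erase hw))] at h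
  simpa using h

lemma g_empty (T : SimpleGraph V) : g T (∅ : Finset V) = 1 := by
  classical
  simp [g, F]

/-- In a connected acyclic graph, a finite set in which every vertex has a neighbour inside
the set contains a vertex `v` whose neighbours inside the set consist of a single vertex `u`. -/
lemma exists_leaf (T : SimpleGraph V) (hconn : T.Connected) (hacyc : T.IsAcyclic)
    {A : Finset V} (hne : A.Nonempty) (hdeg : ∀ v ∈ A, ∃ w ∈ A, T.Adj v w) :
    ∃ u ∈ A, ∃ v ∈ A, T.Adj v u ∧ ∀ w ∈ A, T.Adj v w → w = u := by
  classical
  obtain ⟨r, -⟩ := id hne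
  obtain ⟨v, hvA, hvmax⟩ := A.exists_max_image (fun x => T.dist r x) hne
  obtain ⟨u, huA, hadj⟩ := hdeg v hvA
  have mk : ∀ w ∈ A, ∀ h : T.Adj v w, ∃ p : T.Walk v r, p.IsPath ∧ p.getVert 1 = w := by
    intro w hw h
    obtain ⟨q, hq, hlen⟩ := hconn.exists_path_of_dist r w
    have hvq : v ∉ q.support := by
      intro hmem
      have h1 : T.dist r v ≤ (q.takeUntil v hmem).length := SimpleGraph.dist_le _
      have h2 := congrArg SimpleGraph.Walk.length (q.take_spec hmem)
      rw [SimpleGraph.Walk.length_append] at h2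
      have h3 : T.dist r w ≤ T.dist r v := hvmax w hw
      have h4 : (q.dropUntil v hmem).length = 0 := by omega
      have h5 := SimpleGraph.Walk.eq_of_length_eq_zero h4
      exact h.ne h5
    refine ⟨SimpleGraph.Walk.cons h q.reverse, ?_, ?_⟩
    · rw [SimpleGraph.Walk.cons_isPath_iff]
      refine ⟨hq.reverse, ?_⟩
      simpa [SimpleGraph.Walk.support_reverse] using hvq
    · simp [SimpleGraph.Walk.getVert_cons_succ, SimpleGraph.Walk.getVert_zero]
  refine ⟨u, huA, v, hvA, hadj, ?_⟩
  intro w hw hvw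
  obtain ⟨p1, hp1, hg1⟩ := mk u huA hadj
  obtain ⟨p2, hp2, hg2⟩ := mk w hw hvw
  have heq : (⟨p1, hp1⟩ : T.Path v r) = ⟨p2, hp2⟩ := hacyc.path_unique _ _
  have heq' : p1 = p2 := congrArg Subtype.val heq
  rw [← hg2, ← heq', hg1]

lemma g_mem (T : SimpleGraph V) (hconn : T.Connected) (hacyc : T.IsAcyclic)
    (A : Finset V) : g T A ∈ ({-1, 0, 1} : Set ℤ) := by
  classical
  induction A using Finset.strongInduction with
  | _ A ih =>
    rcases A.eq_empty_or_nonempty with rfl | hne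
    · rw [g_empty]
      simp
    by_cases hiso : ∃ v ∈ A, ∀ w ∈ A, ¬ T.Adj v w
    · obtain ⟨v, hv, hvi⟩ := hiso
      rw [g_eq_zero T hv hvi]
      simp
    · push_neg at hiso
      obtain ⟨u, huA, v, hvA, hadj, huniq⟩ := exists_leaf T hconn hacyc hne hiso
      rw [g_rec T huA]
      have h0 : g T (A.erase u) = 0 := by
        refine g_eq_zero T (Finset.mem_erase.2 ⟨hadj.ne, hvA⟩) ?_
        intro w hw hadjvw
        exact (Finset.mem_erase.1 hw).1 (huniq w (Finset.mem_of_mem_erase hw) hadjvw)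
      rw [h0, zero_sub]
      have hB : ((A.erase u).filter fun w => ¬ T.Adj u w) ⊂ A :=
        lt_of_le_of_lt (Finset.filter_subset _ _) (Finset.erase_ssubset huA)
      have hmem := ih _ hB
      simp only [Set.mem_insert_iff, Set.mem_singleton_iff] at hmem ⊢
      omega

end IndPolyAux

theorem indPoly_tree_at_neg_one {V : Type*} [Fintype V] (T : SimpleGraph V)
    (hconn : T.Connected) (hacyc : T.IsAcyclic) :
    (indPoly T).eval (-1) ∈ ({-1, 0, 1} : Set ℤ) := by
  classical
  have heq : (indPoly T).eval (-1) = IndPolyAux.g T Finset.univ := by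
    unfold indPoly IndPolyAux.g IndPolyAux.F
    rw [Polynomial.eval_finset_sum, Finset.powerset_univ]
    apply Finset.sum_congr rfl
    intro s _
    split_ifs <;> simp
  rw [heq]
  exact IndPolyAux.g_mem T hconn hacyc _
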